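/- Let p ≥ 5 be prime, O a complete DVR with uniformizer π and ramification index e ≥ 2 over ℤ_p, Γ = O ⊗ ℤ_p[ζ_p], and x = (1/π) ⊗ λ^(p-2) where λ^(p-1) = -p. Then the O-module T = Γ + xO is closed under multiplication, i.e., T is an O-subalgebra of the total fraction ring of Γ. -/

import Mathlib

/-- Let `p ≥ 5` be prime, `O` a complete DVR with uniformizer `π` and
ramification index `e ≥ 2` over `ℤ_p` (so `π^2 ∣ p`), `Γ = O ⊗ ℤ_p[ζ_p]` (free over `O`
with basis `1, λ, …, λ^(p-2)`, where `λ^(p-1) = -p`), and `x = (1/π) ⊗ λ^(p-2)` in the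
total fraction ring of `Γ`. Then the `O`-module `T = Γ + xO` is closed under
multiplication, i.e. `T` is an `O`-subalgebra of the total fraction ring of `Γ`. -/
theorem stmt_4 (p : ℕ) (hp : p.Prime) (hp5 : 5 ≤ p)
    (O : Type) [CommRing O] [IsDomain O] [IsDiscreteValuationRing O] [CharZero O]
    [IsAdicComplete (IsLocalRing.maximalIdeal O) O]
    (π : O) (hπ : Irreducible π) (he : π ^ 2 ∣ (p : O))
    (Γ : Type) [CommRing Γ] [Algebra O Γ]
    (lam : Γ) (hlam : lam ^ (p - 1) = -(p : Γ))
    (b : Module.Basis (Fin (p - 1)) O Γ) (hb : ∀ i : Fin (p - 1), b i = lam ^ (i : ℕ))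
    (hπΓ : algebraMap O Γ π ∈ nonZeroDivisors Γ)
    (x : FractionRing Γ)
    (hx : x * algebraMap Γ (FractionRing Γ) (algebraMap O Γ π)
        = algebraMap Γ (FractionRing Γ) (lam ^ (p - 2)))
    (T : Set (FractionRing Γ))
    (hT : T = {y | ∃ (g : Γ) (o : O),
        y = algebraMap Γ (FractionRing Γ) g
          + x * algebraMap Γ (FractionRing Γ) (algebraMap O Γ o)}) :
    ∀ a ∈ T, ∀ c ∈ T, a * c ∈ T := by
  obtain ⟨cc, hcc⟩ := he
  have hnz : NeZero (p - 1) := ⟨by omega⟩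
  set ι := algebraMap Γ (FractionRing Γ) with hιdef
  have hu : IsUnit (ι (algebraMap O Γ π)) :=
    IsLocalization.map_units (M := nonZeroDivisors Γ) (FractionRing Γ) ⟨_, hπΓ⟩
  have hpΓ : ((p : Γ)) = algebraMap O Γ (π ^ 2 * cc) := by
    rw [← hcc, map_natCast]
  have hA : ∀ i : ℕ, x * ι (lam ^ (i + 1))
      = ι (-(algebraMap O Γ (π * cc)) * lam ^ i) := by
    intro i
    apply hu.mul_right_cancel
    rw [show x * ι (lam ^ (i+1)) * ι (algebraMap O Γ π)
        = x * ι (algebraMap O Γ π) * ι (lam ^ (i+1)) by ring, hx,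
      ← map_mul, ← map_mul]
    congr 1
    rw [show lam ^ (p-2) * lam ^ (i+1) = lam ^ (p-1) * lam ^ i by
      rw [← pow_add, ← pow_add]; congr 1; omega, hlam, hpΓ]
    rw [map_mul, map_pow, map_mul]
    ring
  have hB : x * x = ι (-(algebraMap O Γ cc) * lam ^ (p - 3)) := by
    apply hu.mul_right_cancel
    apply hu.mul_right_cancel
    rw [show x * x * ι (algebraMap O Γ π) * ι (algebraMap O Γ π)
        = (x * ι (algebraMap O Γ π)) * (x * ι (algebraMap O Γ π)) by ring, hx,
      ← map_mul, ← map_mul, ← map_mul]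
    congr 1
    rw [show lam ^ (p-2) * lam ^ (p-2) = lam ^ (p-1) * lam ^ (p-3) by
      rw [← pow_add, ← pow_add]; congr 1; omega, hlam, hpΓ]
    simp only [map_mul, map_pow, map_neg]
    ring
  have hC : ∀ g : Γ, ∃ h : Γ,
      x * ι g = ι h + x * ι (algebraMap O Γ (b.repr g 0)) := by
    intro g
    have hg : g = ∑ i : Fin (p-1), algebraMap O Γ (b.repr g i) * lam ^ (i : ℕ) := by
      conv_lhs => rw [← b.sum_repr g]
      exact Finset.sum_congr rfl fun i _ => by rw [hb i, Algebra.smul_def]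
    refine ⟨∑ i ∈ Finset.univ.erase (0 : Fin (p-1)),
        algebraMap O Γ (b.repr g i) * (-(algebraMap O Γ (π * cc)) * lam ^ ((i : ℕ) - 1)), ?_⟩
    conv_lhs => rw [hg]
    rw [map_sum, Finset.mul_sum, map_sum,
      ← Finset.sum_erase_add _ _ (Finset.mem_univ (0 : Fin (p-1)))]
    congr 1
    · refine Finset.sum_congr rfl fun i hi => ?_
      obtain ⟨j, hj⟩ : ∃ j, (i : ℕ) = j + 1 := by
        have hi0 : (i : ℕ) ≠ 0 := fun h =>
          (Finset.mem_erase.mp hi).1 (Fin.ext (h.trans (Fin.val_zero _).symm))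
        exact ⟨(i:ℕ) - 1, by omega⟩
      rw [hj]
      simp only [Nat.add_sub_cancel]
      have h2 := hA j
      simp only [map_mul, map_neg] at h2 ⊢
      linear_combination ι (algebraMap O Γ (b.repr g i)) * h2
    · rw [Fin.val_zero, pow_zero, mul_one]
  intro a ha c hc
  rw [hT] at ha hc ⊢
  obtain ⟨g, o, rfl⟩ := ha
  obtain ⟨g', o', rfl⟩ := hc
  obtain ⟨h, hh⟩ := hC g
  obtain ⟨h', hh'⟩ := hC g'
  refine ⟨g * g' + algebraMap O Γ o' * h + algebraMap O Γ o * h'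
      + algebraMap O Γ o * algebraMap O Γ o' * (-(algebraMap O Γ cc) * lam ^ (p-3)),
    o * (b.repr g' 0) + o' * (b.repr g 0), ?_⟩
  rw [show (ι g + x * ι (algebraMap O Γ o)) * (ι g' + x * ι (algebraMap O Γ o'))
      = ι g * ι g' + ι (algebraMap O Γ o') * (x * ι g) + ι (algebraMap O Γ o) * (x * ι g')
        + ι (algebraMap O Γ o) * ι (algebraMap O Γ o') * (x * x) by ring,
    hh, hh', hB]
  simp only [map_add, map_mul, map_neg]
  ring
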